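/- Suppose $\underline{k} I_d \preceq \Sigma_i \preceq \overline{k} I_d$ for all $i=1,\dots,n$ with $0 < \underline{k} \le \overline{k}$, and suppose $\|X_i - x_0\|_2 \le r$ for all $i$ for some $x_0\in\mathbb{R}^d$ and $r>0$. Then for every weight vector $\alpha$ in the probability simplex, the ridgeline point $x^*(\alpha) = \left(\sum_i \alpha_i \Sigma_i^{-1}\right)^{-1}\sum_i \alpha_i \Sigma_i^{-1} X_i$ satisfies $\|x^*(\alpha) - x_0\|_2 \le (\overline{k}/\underline{k})\, r$. -/

import Mathlib

open MeasureTheory Matrix Finset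

section RidgelineAux
open Matrix
open scoped MatrixOrder
variable {d : ℕ}

lemma psd_smul {A : Matrix (Fin d) (Fin d) ℝ} (hA : A.PosSemidef) {c : ℝ} (hc : 0 ≤ c) :
    (c • A).PosSemidef := by
  rw [posSemidef_iff_dotProduct_mulVec]
  refine ⟨?_, fun x => ?_⟩
  · unfold Matrix.IsHermitian
    rw [conjTranspose_smul, hA.1.eq]; simp
  · rw [smul_mulVec, dotProduct_smul, smul_eq_mul]
    exact mul_nonneg hc (hA.dotProduct_mulVec_nonneg x)

lemma TAT_one {A T : Matrix (Fin d) (Fin d) ℝ} (hTT : T * T = A⁻¹) (hdetA : IsUnit A.det) :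
    T * A * T = 1 := by
  have h1 : (T * T) * A = 1 := by rw [hTT, Matrix.nonsing_inv_mul A hdetA]
  have h2 : (T * A) * T = 1 := by
    rw [mul_eq_one_comm, ← Matrix.mul_assoc]
    exact h1
  rwa [Matrix.mul_assoc] at h2 ⊢

lemma inv_upper_aux {A T : Matrix (Fin d) (Fin d) ℝ} (hT : T.IsHermitian)
    (hTT : T * T = A⁻¹) (hdetA : IsUnit A.det) {k : ℝ} (hk : 0 < k)
    (h : (A - k • (1 : Matrix (Fin d) (Fin d) ℝ)).PosSemidef) :
    (k⁻¹ • (1 : Matrix (Fin d) (Fin d) ℝ) - A⁻¹).PosSemidef := by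
  have key : (T * (A - k • 1) * T).PosSemidef := by
    have h1 := h.conjTranspose_mul_mul_same T
    rwa [hT.eq] at h1
  have key2 : T * (A - k • (1 : Matrix (Fin d) (Fin d) ℝ)) * T = 1 - k • A⁻¹ := by
    rw [Matrix.mul_sub, Matrix.sub_mul, TAT_one hTT hdetA, Matrix.mul_smul, Matrix.mul_one,
      Matrix.smul_mul, hTT]
  rw [key2] at key
  have := psd_smul key (le_of_lt (inv_pos.mpr hk))
  rwa [smul_sub, smul_smul, inv_mul_cancel₀ hk.ne', one_smul] at this

lemma inv_lower_aux {A T : Matrix (Fin d) (Fin d) ℝ} (hT : T.IsHermitian)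
    (hTT : T * T = A⁻¹) (hdetA : IsUnit A.det) {k : ℝ} (hk : 0 < k)
    (h : (k • (1 : Matrix (Fin d) (Fin d) ℝ) - A).PosSemidef) :
    (A⁻¹ - k⁻¹ • (1 : Matrix (Fin d) (Fin d) ℝ)).PosSemidef := by
  have key : (T * (k • (1 : Matrix (Fin d) (Fin d) ℝ) - A) * T).PosSemidef := by
    have h1 := h.conjTranspose_mul_mul_same T
    rwa [hT.eq] at h1
  have key2 : T * (k • (1 : Matrix (Fin d) (Fin d) ℝ) - A) * T = k • A⁻¹ - 1 := by
    rw [Matrix.mul_sub, Matrix.sub_mul, TAT_one hTT hdetA, Matrix.mul_smul, Matrix.mul_one,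
      Matrix.smul_mul, hTT]
  rw [key2] at key
  have := psd_smul key (le_of_lt (inv_pos.mpr hk))
  rwa [smul_sub, smul_smul, inv_mul_cancel₀ hk.ne', one_smul] at this

lemma inv_upper {A : Matrix (Fin d) (Fin d) ℝ} (hA : A.PosDef) {k : ℝ} (hk : 0 < k)
    (h : (A - k • (1 : Matrix (Fin d) (Fin d) ℝ)).PosSemidef) :
    (k⁻¹ • (1 : Matrix (Fin d) (Fin d) ℝ) - A⁻¹).PosSemidef :=
  inv_upper_aux (CFC.sqrt_nonneg A⁻¹).posSemidef.1 (CFC.sqrt_mul_sqrt_self A⁻¹ hA.inv.posSemidef.nonneg)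
    ((Matrix.isUnit_iff_isUnit_det A).1 hA.isUnit) hk h

lemma inv_lower {A : Matrix (Fin d) (Fin d) ℝ} (hA : A.PosDef) {k : ℝ} (hk : 0 < k)
    (h : (k • (1 : Matrix (Fin d) (Fin d) ℝ) - A).PosSemidef) :
    (A⁻¹ - k⁻¹ • (1 : Matrix (Fin d) (Fin d) ℝ)).PosSemidef :=
  inv_lower_aux (CFC.sqrt_nonneg A⁻¹).posSemidef.1 (CFC.sqrt_mul_sqrt_self A⁻¹ hA.inv.posSemidef.nonneg)
    ((Matrix.isUnit_iff_isUnit_det A).1 hA.isUnit) hk h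

lemma opnorm_aux {B S : Matrix (Fin d) (Fin d) ℝ} (hS : S.IsHermitian) (hSS : S * S = B)
    {c : ℝ} (hc : 0 ≤ c) (hB : B.PosSemidef)
    (h : (c • (1 : Matrix (Fin d) (Fin d) ℝ) - B).PosSemidef)
    (v : EuclideanSpace ℝ (Fin d)) :
    ‖Matrix.toEuclideanLin B v‖ ≤ c * ‖v‖ := by
  have hBt : Bᵀ = B := by
    ext i j
    have := congrFun (congrFun hB.1.eq i) j
    rw [conjTranspose_apply, star_trivial] at this
    rw [transpose_apply, ← this]
  have key : (c • B - B * B).PosSemidef := by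
    have h1 := h.conjTranspose_mul_mul_same S
    rw [hS.eq] at h1
    have e : S * (c • (1 : Matrix (Fin d) (Fin d) ℝ) - B) * S = c • B - B * B := by
      rw [Matrix.mul_sub, Matrix.sub_mul, Matrix.mul_smul, Matrix.mul_one, Matrix.smul_mul, hSS]
      congr 1
      rw [← hSS, Matrix.mul_assoc, Matrix.mul_assoc, Matrix.mul_assoc]
    rwa [e] at h1
  set x : Fin d → ℝ := (WithLp.equiv 2 (Fin d → ℝ)) v with hx
  have hq : (B *ᵥ x) ⬝ᵥ (B *ᵥ x) = x ⬝ᵥ ((B * B) *ᵥ x) := by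
    rw [← Matrix.mulVec_mulVec, Matrix.dotProduct_mulVec x B (B *ᵥ x), ← Matrix.mulVec_transpose,
      hBt]
  have h1 : x ⬝ᵥ ((B * B) *ᵥ x) ≤ c * (x ⬝ᵥ (B *ᵥ x)) := by
    have := key.dotProduct_mulVec_nonneg x
    rw [star_trivial, Matrix.sub_mulVec, dotProduct_sub, smul_mulVec, dotProduct_smul,
      smul_eq_mul] at this
    linarith
  have h2 : x ⬝ᵥ (B *ᵥ x) ≤ c * (x ⬝ᵥ x) := by
    have := h.dotProduct_mulVec_nonneg x
    rw [star_trivial, Matrix.sub_mulVec, dotProduct_sub, smul_mulVec, dotProduct_smul,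
      smul_eq_mul, one_mulVec] at this
    linarith
  have hn : ∀ w : EuclideanSpace ℝ (Fin d),
      ‖w‖ ^ 2 = (WithLp.equiv 2 (Fin d → ℝ)) w ⬝ᵥ (WithLp.equiv 2 (Fin d → ℝ)) w := by
    intro w
    rw [EuclideanSpace.norm_eq, Real.sq_sqrt (by positivity)]
    simp [dotProduct, Real.norm_eq_abs, sq_abs, pow_two]
  have hsq : ‖Matrix.toEuclideanLin B v‖ ^ 2 ≤ (c * ‖v‖) ^ 2 := by
    rw [hn]
    have he : (WithLp.equiv 2 (Fin d → ℝ)) (Matrix.toEuclideanLin B v) = B *ᵥ x := by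
      exact Matrix.ofLp_toEuclideanLin_apply B v
    rw [he]
    have hb2 : c * (x ⬝ᵥ (B *ᵥ x)) ≤ c * (c * (x ⬝ᵥ x)) := mul_le_mul_of_nonneg_left h2 hc
    have : (c * ‖v‖) ^ 2 = c * (c * (x ⬝ᵥ x)) := by
      rw [mul_pow, hn v]; ring
    rw [this, hq]
    linarith
  have := Real.sqrt_le_sqrt hsq
  rwa [Real.sqrt_sq (norm_nonneg _), Real.sqrt_sq (by positivity)] at this

lemma opnorm_bound {B : Matrix (Fin d) (Fin d) ℝ} (hB : B.PosSemidef)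
    {c : ℝ} (hc : 0 ≤ c)
    (h : (c • (1 : Matrix (Fin d) (Fin d) ℝ) - B).PosSemidef)
    (v : EuclideanSpace ℝ (Fin d)) :
    ‖Matrix.toEuclideanLin B v‖ ≤ c * ‖v‖ :=
  opnorm_aux (CFC.sqrt_nonneg B).posSemidef.1 (CFC.sqrt_mul_sqrt_self B hB.nonneg) hc hB h v

lemma psd_sum {d n : ℕ} (f : Fin n → Matrix (Fin d) (Fin d) ℝ) (hf : ∀ i, (f i).PosSemidef) :
    (∑ i, f i).PosSemidef :=
  Finset.sum_induction f _ (fun _ _ ha hb => ha.add hb) Matrix.PosSemidef.zero (fun i _ => hf i)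

lemma posDef_smul_one {d : ℕ} {c : ℝ} (hc : 0 < c) :
    (c • (1 : Matrix (Fin d) (Fin d) ℝ)).PosDef := by
  rw [posDef_iff_dotProduct_mulVec]
  refine ⟨?_, fun x hx => ?_⟩
  · unfold Matrix.IsHermitian
    rw [conjTranspose_smul, conjTranspose_one]; simp
  · rw [smul_mulVec, dotProduct_smul, one_mulVec, smul_eq_mul]
    exact mul_pos hc (Matrix.dotProduct_star_self_pos_iff.mpr hx)

end RidgelineAux

/-- Support bound for the ridgeline manifold with general covariances:
if `kl • 1 ⪯ Σ i ⪯ ku • 1` and `‖X i - x₀‖ ≤ r` for all `i`, then every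
ridgeline point `x*(α)` lies within distance `(ku/kl) r` of `x₀`. -/
theorem ridgeline_ball_bound {d n : ℕ}
    (X : Fin n → EuclideanSpace ℝ (Fin d))
    (Sig : Fin n → Matrix (Fin d) (Fin d) ℝ)
    (hpd : ∀ i, (Sig i).PosDef)
    (kl ku : ℝ) (hkl : 0 < kl) (hku : kl ≤ ku)
    (hlow : ∀ i, (Sig i - kl • (1 : Matrix (Fin d) (Fin d) ℝ)).PosSemidef)
    (hhigh : ∀ i, (ku • (1 : Matrix (Fin d) (Fin d) ℝ) - Sig i).PosSemidef)
    (x₀ : EuclideanSpace ℝ (Fin d)) (r : ℝ) (hr : 0 < r)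
    (hX : ∀ i, ‖X i - x₀‖ ≤ r)
    (α : Fin n → ℝ) (hα : ∀ i, 0 ≤ α i) (hα1 : ∑ i, α i = 1) :
    ‖Matrix.toEuclideanLin (∑ i, α i • (Sig i)⁻¹)⁻¹
        (∑ i, α i • Matrix.toEuclideanLin (Sig i)⁻¹ (X i)) - x₀‖
      ≤ (ku / kl) * r := by
  have hku0 : 0 < ku := lt_of_lt_of_le hkl hku
  set A : Matrix (Fin d) (Fin d) ℝ := ∑ i, α i • (Sig i)⁻¹ with hAdef
  have hup : ∀ i, (kl⁻¹ • (1 : Matrix (Fin d) (Fin d) ℝ) - (Sig i)⁻¹).PosSemidef :=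
    fun i => inv_upper (hpd i) hkl (hlow i)
  have hlo : ∀ i, ((Sig i)⁻¹ - ku⁻¹ • (1 : Matrix (Fin d) (Fin d) ℝ)).PosSemidef :=
    fun i => inv_lower (hpd i) hku0 (hhigh i)
  have hAlow : (A - ku⁻¹ • (1 : Matrix (Fin d) (Fin d) ℝ)).PosSemidef := by
    have he : ∑ i, α i • ((Sig i)⁻¹ - ku⁻¹ • (1 : Matrix (Fin d) (Fin d) ℝ))
        = A - ku⁻¹ • (1 : Matrix (Fin d) (Fin d) ℝ) := by
      rw [hAdef]
      simp only [smul_sub]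
      rw [Finset.sum_sub_distrib, ← Finset.sum_smul, hα1, one_smul]
    rw [← he]
    exact psd_sum _ fun i => psd_smul (hlo i) (hα i)
  have hApd : A.PosDef := by
    have h1 : (ku⁻¹ • (1 : Matrix (Fin d) (Fin d) ℝ)
        + (A - ku⁻¹ • (1 : Matrix (Fin d) (Fin d) ℝ))).PosDef :=
      (posDef_smul_one (inv_pos.mpr hku0)).add_posSemidef hAlow
    rwa [add_sub_cancel] at h1
  have hAup : (ku • (1 : Matrix (Fin d) (Fin d) ℝ) - A⁻¹).PosSemidef := by
    have := inv_upper hApd (inv_pos.mpr hku0) hAlow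
    rwa [inv_inv] at this
  have hAinv : (A⁻¹).PosSemidef := hApd.inv.posSemidef
  have hdetA : IsUnit A.det := (Matrix.isUnit_iff_isUnit_det A).1 hApd.isUnit
  have hx0 : Matrix.toEuclideanLin A⁻¹ (Matrix.toEuclideanLin A x₀) = x₀ := by
    have h1 : A⁻¹ * A = 1 := Matrix.nonsing_inv_mul A hdetA
    simp only [Matrix.toEuclideanLin_apply]
    simp [Matrix.mulVec_mulVec, h1]
  have hsum : Matrix.toEuclideanLin A x₀ = ∑ i, α i • Matrix.toEuclideanLin (Sig i)⁻¹ x₀ := by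
    rw [hAdef, map_sum]
    simp [LinearMap.sum_apply]
  have hdiff : Matrix.toEuclideanLin A⁻¹ (∑ i, α i • Matrix.toEuclideanLin (Sig i)⁻¹ (X i)) - x₀
      = Matrix.toEuclideanLin A⁻¹
          (∑ i, α i • Matrix.toEuclideanLin (Sig i)⁻¹ (X i - x₀)) := by
    conv_lhs => rw [← hx0]
    rw [← map_sub, hsum, ← Finset.sum_sub_distrib]
    congr 1
    refine Finset.sum_congr rfl fun i _ => ?_
    rw [map_sub, smul_sub]
  rw [hdiff]
  calc ‖Matrix.toEuclideanLin A⁻¹ (∑ i, α i • Matrix.toEuclideanLin (Sig i)⁻¹ (X i - x₀))‖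
      ≤ ku * ‖∑ i, α i • Matrix.toEuclideanLin (Sig i)⁻¹ (X i - x₀)‖ :=
        opnorm_bound hAinv hku0.le hAup _
    _ ≤ ku * ∑ i, α i * (kl⁻¹ * r) := by
        refine mul_le_mul_of_nonneg_left ?_ hku0.le
        refine le_trans (norm_sum_le _ _) (Finset.sum_le_sum fun i _ => ?_)
        rw [norm_smul, Real.norm_eq_abs, abs_of_nonneg (hα i)]
        refine mul_le_mul_of_nonneg_left ?_ (hα i)
        calc ‖Matrix.toEuclideanLin (Sig i)⁻¹ (X i - x₀)‖
            ≤ kl⁻¹ * ‖X i - x₀‖ :=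
              opnorm_bound (hpd i).inv.posSemidef (inv_pos.mpr hkl).le (hup i) _
          _ ≤ kl⁻¹ * r := mul_le_mul_of_nonneg_left (hX i) (inv_pos.mpr hkl).le
    _ = (ku / kl) * r := by
        rw [← Finset.sum_mul, hα1, one_mul]
        field_simp
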